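/- Let n ∈ ℕ, L : Fin n → ℕ, let a assign a real coefficient a_K to every multi-index K ≤ L, and let d, d̄ : Fin n → ℝ satisfy d i ≠ d̄ i for all i. Define the Bernstein coefficients b_K over the box [d, d̄] by the explicit formula b_K = ∑_{J ≤ K} (∏_i ((K i).choose (J i) : ℝ) / ((L i).choose (J i))) · (∏_i (d̄ i − d i)^(J i)) · ∑_{J ≤ I ≤ L} (∏_i ((I i).choose (J i) : ℝ)) · (∏_i (d i)^(I i − J i)) · a_I. Then for every x : Fin n → ℝ, with t i = (x i − d i)/(d̄ i − d i), one has ∑_{K ≤ L} a_K · ∏_i (x i)^(K i) = ∑_{K ≤ L} b_K · Ber_{K,L}(t). -/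

import Mathlib

/-- Multivariate Bernstein basis polynomial `Ber_{K,L}(t)`. -/
noncomputable def Ber {n : ℕ} (L K : Fin n → ℕ) (t : Fin n → ℝ) : ℝ :=
  ∏ i, ((L i).choose (K i) : ℝ) * (t i) ^ (K i) * (1 - t i) ^ (L i - K i)

/-- The finite set of multi-indices `K ≤ L`. -/
def multiIdx {n : ℕ} (L : Fin n → ℕ) : Finset (Fin n → ℕ) :=
  Fintype.piFinset fun i => Finset.range (L i + 1)

lemma one_dim (Li j : ℕ) (hj : j ≤ Li) (t : ℝ) :
    ∑ k ∈ Finset.Icc j Li,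
      (k.choose j : ℝ) / (Li.choose j) * ((Li.choose k : ℝ) * t ^ k * (1 - t) ^ (Li - k))
      = t ^ j := by
  have hL : (Li.choose j : ℝ) ≠ 0 := Nat.cast_ne_zero.mpr (Nat.choose_pos hj).ne'
  have step : ∀ k ∈ Finset.Icc j Li,
      (k.choose j : ℝ) / (Li.choose j) * ((Li.choose k : ℝ) * t ^ k * (1 - t) ^ (Li - k))
      = ((Li - j).choose (k - j) : ℝ) * t ^ k * (1 - t) ^ (Li - k) := by
    intro k hk
    rw [Finset.mem_Icc] at hk
    have h := Nat.choose_mul (n := Li) hk.1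
    have h' : (Li.choose k : ℝ) * (k.choose j : ℝ) =
        (Li.choose j : ℝ) * ((Li - j).choose (k - j) : ℝ) := by
      exact_mod_cast congrArg (Nat.cast : ℕ → ℝ) h
    field_simp
    linear_combination t ^ k * (1 - t) ^ (Li - k) * h'
  rw [Finset.sum_congr rfl step]
  have : Finset.Icc j Li = Finset.Ico j (Li + 1) := by
    rw [Finset.Ico_add_one_right_eq_Icc]
  rw [this, Finset.sum_Ico_eq_sum_range]
  have hrange : Li + 1 - j = Li - j + 1 := by omega
  rw [hrange]
  have step2 : ∀ m ∈ Finset.range (Li - j + 1),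
      ((Li - j).choose (j + m - j) : ℝ) * t ^ (j + m) * (1 - t) ^ (Li - (j + m))
      = t ^ j * (t ^ m * (1 - t) ^ (Li - j - m) * ((Li - j).choose m : ℝ)) := by
    intro m hm
    rw [Nat.add_sub_cancel_left, pow_add]
    have : Li - (j + m) = Li - j - m := by omega
    rw [this]; ring
  rw [Finset.sum_congr rfl step2, ← Finset.mul_sum, ← add_pow]
  simp

lemma multi_sum_pow {n : ℕ} (L J : Fin n → ℕ) (hJ : ∀ i, J i ≤ L i) (t : Fin n → ℝ) :
    ∑ K ∈ Fintype.piFinset (fun i => Finset.Icc (J i) (L i)),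
      (∏ i, ((K i).choose (J i) : ℝ) / ((L i).choose (J i))) * Ber L K t
      = ∏ i, t i ^ J i := by
  have : ∀ i, t i ^ J i = ∑ k ∈ Finset.Icc (J i) (L i),
      (k.choose (J i) : ℝ) / ((L i).choose (J i)) *
        (((L i).choose k : ℝ) * t i ^ k * (1 - t i) ^ (L i - k)) :=
    fun i => (one_dim (L i) (J i) (hJ i) (t i)).symm
  rw [Finset.prod_congr rfl (fun i _ => this i), Finset.prod_univ_sum]
  apply Finset.sum_congr rfl
  intro K _
  rw [Ber, ← Finset.prod_mul_distrib]

lemma swap_sum {n : ℕ} (L : Fin n → ℕ) (f : (Fin n → ℕ) → (Fin n → ℕ) → ℝ) :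
    ∑ K ∈ multiIdx L, ∑ J ∈ multiIdx K, f K J
      = ∑ J ∈ multiIdx L, ∑ K ∈ Fintype.piFinset (fun i => Finset.Icc (J i) (L i)), f K J := by
  have h1 : ∀ K ∈ multiIdx L, ∑ J ∈ multiIdx K, f K J
      = ∑ J ∈ multiIdx L, if (∀ i, J i ≤ K i) then f K J else 0 := by
    intro K hK
    rw [Finset.sum_ite, Finset.sum_const_zero, add_zero]
    apply Finset.sum_congr _ (fun _ _ => rfl)
    ext J
    simp only [Finset.mem_filter, multiIdx, Fintype.mem_piFinset, Finset.mem_range] at *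
    constructor
    · intro h
      exact ⟨fun i => by have := h i; have := hK i; omega, fun i => by have := h i; omega⟩
    · intro h i; have := h.2 i; omega
  rw [Finset.sum_congr rfl h1, Finset.sum_comm]
  apply Finset.sum_congr rfl
  intro J hJ
  rw [Finset.sum_ite, Finset.sum_const_zero, add_zero]
  apply Finset.sum_congr _ (fun _ _ => rfl)
  ext K
  simp only [Finset.mem_filter, multiIdx, Fintype.mem_piFinset, Finset.mem_range,
    Finset.mem_Icc] at *
  constructor
  · intro h i; have := h.1 i; have := h.2 i; omega
  · intro h; exact ⟨fun i => by have := (h i).2; omega, fun i => (h i).1⟩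

/-- The Bernstein coefficients `b_K` of the polynomial with power-basis coefficients `a`
over the box `[d, d̄]`. -/
noncomputable def bernCoeff {n : ℕ} (L : Fin n → ℕ) (a : (Fin n → ℕ) → ℝ)
    (d dbar : Fin n → ℝ) (K : Fin n → ℕ) : ℝ :=
  ∑ J ∈ multiIdx K,
    (∏ i, ((K i).choose (J i) : ℝ) / ((L i).choose (J i))) *
    (∏ i, (dbar i - d i) ^ (J i)) *
    ∑ I ∈ Fintype.piFinset (fun i => Finset.Icc (J i) (L i)),
      (∏ i, ((I i).choose (J i) : ℝ)) * (∏ i, (d i) ^ (I i - J i)) * a I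

/-- Over a nondegenerate box, the power-basis polynomial equals its Bernstein form with the
Bernstein coefficients `bernCoeff`. -/
theorem bernstein_coefficient_representation (n : ℕ) (L : Fin n → ℕ)
    (a : (Fin n → ℕ) → ℝ) (d dbar : Fin n → ℝ) (hd : ∀ i, d i ≠ dbar i) (x : Fin n → ℝ) :
    ∑ K ∈ multiIdx L, a K * ∏ i, (x i) ^ (K i)
      = ∑ K ∈ multiIdx L,
          bernCoeff L a d dbar K * Ber L K (fun i => (x i - d i) / (dbar i - d i)) := by
  have hsub : ∀ i, dbar i - d i ≠ 0 := fun i => sub_ne_zero.mpr (Ne.symm (hd i))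
  set t : Fin n → ℝ := fun i => (x i - d i) / (dbar i - d i) with htdef
  have ht : ∀ i, (dbar i - d i) * t i = x i - d i := by
    intro i
    simp only [htdef]
    rw [mul_comm]
    exact div_mul_cancel₀ _ (hsub i)
  symm
  calc
    ∑ K ∈ multiIdx L, bernCoeff L a d dbar K * Ber L K t
        = ∑ K ∈ multiIdx L, ∑ J ∈ multiIdx K,
            (∏ i, ((K i).choose (J i) : ℝ) / ((L i).choose (J i))) *
              (∏ i, (dbar i - d i) ^ (J i)) *
              (∑ I ∈ Fintype.piFinset (fun i => Finset.Icc (J i) (L i)),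
                (∏ i, ((I i).choose (J i) : ℝ)) * (∏ i, (d i) ^ (I i - J i)) * a I) *
              Ber L K t := by
      simp only [bernCoeff, Finset.sum_mul]
    _ = ∑ J ∈ multiIdx L, ∑ K ∈ Fintype.piFinset (fun i => Finset.Icc (J i) (L i)),
          (∏ i, ((K i).choose (J i) : ℝ) / ((L i).choose (J i))) *
            (∏ i, (dbar i - d i) ^ (J i)) *
            (∑ I ∈ Fintype.piFinset (fun i => Finset.Icc (J i) (L i)),
              (∏ i, ((I i).choose (J i) : ℝ)) * (∏ i, (d i) ^ (I i - J i)) * a I) *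
            Ber L K t := swap_sum L _
    _ = ∑ J ∈ multiIdx L,
          ((∏ i, (dbar i - d i) ^ (J i)) *
            (∑ I ∈ Fintype.piFinset (fun i => Finset.Icc (J i) (L i)),
              (∏ i, ((I i).choose (J i) : ℝ)) * (∏ i, (d i) ^ (I i - J i)) * a I)) *
            ∏ i, t i ^ J i := by
      refine Finset.sum_congr rfl fun J hJ => ?_
      have hJL : ∀ i, J i ≤ L i := by
        simp only [multiIdx, Fintype.mem_piFinset, Finset.mem_range] at hJ
        intro i; have := hJ i; omega
      rw [← multi_sum_pow L J hJL t, Finset.mul_sum]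
      exact Finset.sum_congr rfl fun K _ => by ring
    _ = ∑ J ∈ multiIdx L, ∑ I ∈ Fintype.piFinset (fun i => Finset.Icc (J i) (L i)),
          (∏ i, (x i - d i) ^ (J i)) *
            ((∏ i, ((I i).choose (J i) : ℝ)) * (∏ i, (d i) ^ (I i - J i)) * a I) := by
      refine Finset.sum_congr rfl fun J hJ => ?_
      have hx : (∏ i, (dbar i - d i) ^ (J i)) * (∏ i, t i ^ J i)
          = ∏ i, (x i - d i) ^ (J i) := by
        rw [← Finset.prod_mul_distrib]
        exact Finset.prod_congr rfl fun i _ => by rw [← mul_pow, ht i]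
      rw [mul_comm _ (∏ i, t i ^ J i), ← mul_assoc, mul_comm (∏ i, t i ^ J i), hx,
        Finset.mul_sum]
    _ = ∑ I ∈ multiIdx L, ∑ J ∈ multiIdx I,
          (∏ i, (x i - d i) ^ (J i)) *
            ((∏ i, ((I i).choose (J i) : ℝ)) * (∏ i, (d i) ^ (I i - J i)) * a I) := by
      exact (swap_sum L fun I J =>
        (∏ i, (x i - d i) ^ (J i)) *
          ((∏ i, ((I i).choose (J i) : ℝ)) * (∏ i, (d i) ^ (I i - J i)) * a I)).symm
    _ = ∑ I ∈ multiIdx L, a I * ∏ i, (x i) ^ (I i) := by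
      refine Finset.sum_congr rfl fun I _ => ?_
      have hx : ∏ i, (x i) ^ (I i)
          = ∑ J ∈ multiIdx I, ∏ i,
              (x i - d i) ^ (J i) * (d i) ^ (I i - J i) * (((I i).choose (J i) : ℝ)) := by
        have h0 := Finset.prod_univ_sum (fun i => Finset.range (I i + 1))
          (fun i j => (x i - d i) ^ j * (d i) ^ (I i - j) * (((I i).choose j : ℝ)))
        rw [multiIdx, ← h0]
        refine Finset.prod_congr rfl fun i _ => ?_
        rw [← add_pow, sub_add_cancel]
      rw [hx, Finset.mul_sum]
      refine Finset.sum_congr rfl fun J _ => ?_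
      rw [Finset.prod_mul_distrib, Finset.prod_mul_distrib]
      ring
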